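/- Suppose u has finite support with top point b ≥ 1: u(b) > 0 and u(n) = 0 for all n > b. Then S(n) = 0 for all n ≥ b, and S(b−1) = u(b)·μ > 0; in particular the last non-zero step of the restart sequence is a step down. -/
import Mathlib

lemma aux_sum_Ico (u : ℕ → ℝ) :
    ∀ m, ∑ k ∈ Finset.range m, ∑ j ∈ Finset.Ico (k+1) m, u j
      = ∑ j ∈ Finset.range m, (j : ℝ) * u j := by
  intro m
  induction m with
  | zero => simp
  | succ m ih =>
    rw [Finset.sum_range_succ, Finset.sum_range_succ]
    have h1 : ∀ k ∈ Finset.range m,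
        ∑ j ∈ Finset.Ico (k+1) (m+1), u j = (∑ j ∈ Finset.Ico (k+1) m, u j) + u m := by
      intro k hk
      rw [Finset.sum_Ico_succ_top (Nat.succ_le_of_lt (Finset.mem_range.mp hk))]
    rw [Finset.sum_congr rfl h1, Finset.sum_add_distrib, ih, Finset.sum_const,
      Finset.card_range]
    simp [mul_comm]

theorem finite_support_last_step_down
    (u : ℕ → ℝ) (hu0 : ∀ n, 0 ≤ u n) (hu1 : ∑' n, u n = 1)
    (hmean : Summable (fun n : ℕ => (n : ℝ) * u n))
    (μ : ℝ) (hμ : μ = ∑' n : ℕ, (n : ℝ) * u n)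
    (U S : ℕ → ℝ)
    (hU : ∀ n, U n = ∑ k ∈ Finset.range (n + 1), u k)
    (hS : ∀ n, S n = ∑ k ∈ Finset.range (n + 1), (1 - U k - u k * μ))
    (b : ℕ) (hb : 1 ≤ b) (hub : 0 < u b) (hb' : ∀ n, b < n → u n = 0) :
    (∀ n, b ≤ n → S n = 0) ∧ S (b - 1) = u b * μ ∧ 0 < S (b - 1) := by
  have hzero : ∀ n ∉ Finset.range (b+1), u n = 0 := by
    intro n hn
    exact hb' n (by simp [Finset.mem_range] at hn; omega)
  have hsum1 : ∑ k ∈ Finset.range (b+1), u k = 1 := by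
    rw [← hu1]; exact (tsum_eq_sum hzero).symm
  have hμb : μ = ∑ k ∈ Finset.range (b+1), (k : ℝ) * u k := by
    rw [hμ]
    exact tsum_eq_sum (fun n hn => by rw [hzero n hn, mul_zero])
  -- U n = 1 for n ≥ b
  have hU1 : ∀ n, b ≤ n → U n = 1 := by
    intro n hn
    rw [hU, ← hsum1]
    exact (Finset.sum_subset (Finset.range_subset_range.mpr (by omega))
      (fun x _ hx => hzero x hx)).symm
  -- S b = 0
  have hSb : S b = 0 := by
    have h1U : ∀ k ∈ Finset.range (b+1),
        1 - U k = ∑ j ∈ Finset.Ico (k+1) (b+1), u j := by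
      intro k hk
      rw [Finset.sum_Ico_eq_sub _ (Nat.succ_le_succ (Nat.lt_succ_iff.mp (Finset.mem_range.mp hk))),
        hsum1, hU]
    have : S b = (∑ k ∈ Finset.range (b+1), (1 - U k))
        - (∑ k ∈ Finset.range (b+1), u k) * μ := by
      rw [hS, Finset.sum_sub_distrib, Finset.sum_mul]
    rw [this, Finset.sum_congr rfl h1U, aux_sum_Ico, ← hμb, hsum1]
    ring
  have hstep : ∀ n, S (n+1) = S n + (1 - U (n+1) - u (n+1) * μ) := by
    intro n
    rw [hS, hS, Finset.sum_range_succ]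
  have h1 : ∀ n, b ≤ n → S n = 0 := by
    intro n hn
    induction n, hn using Nat.le_induction with
    | base => exact hSb
    | succ n hn ih =>
      rw [hstep, ih, hU1 (n+1) (by omega), hb' (n+1) (by omega)]
      ring
  have hSb1 : S (b - 1) = u b * μ := by
    have h := hstep (b - 1)
    have hb1 : b - 1 + 1 = b := by omega
    rw [hb1] at h
    rw [hSb, hU1 b le_rfl] at h
    linarith
  have hμpos : 0 < μ := by
    rw [hμb]
    apply Finset.sum_pos' (fun i _ => mul_nonneg (Nat.cast_nonneg i) (hu0 i))
    exact ⟨b, Finset.self_mem_range_succ b, by positivity⟩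
  exact ⟨h1, hSb1, hSb1 ▸ mul_pos hub hμpos⟩
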